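/- Let G be a P5-free graph and let 𝒞 be a family of subsets of V(G) such that for each C ∈ 𝒞 the induced subgraph G[C] is connected. Define the graph H with vertex set 𝒞, where distinct C₁, C₂ ∈ 𝒞 are adjacent in H if and only if C₁ and C₂ touch each other, i.e., C₁ ∩ C₂ ≠ ∅ or there is an edge of G with one endpoint in C₁ and the other in C₂. Then H is P5-free. -/

import Mathlib

open SimpleGraph

/-- A graph is `P₅`-free if it contains no induced subgraph isomorphic to the
path on five vertices (i.e. no graph embedding of `pathGraph 5`). -/
def P5Free {V : Type*} (G : SimpleGraph V) : Prop :=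
  IsEmpty (SimpleGraph.pathGraph 5 ↪g G)

/-- Two vertex subsets touch: they intersect, or some edge of `G` joins them. -/
def Touch {V : Type*} (G : SimpleGraph V) (A B : Set V) : Prop :=
  (A ∩ B).Nonempty ∨ ∃ a ∈ A, ∃ b ∈ B, G.Adj a b

/-- The blob graph on a family `𝒞` of vertex subsets of `G`: distinct sets are
adjacent iff they touch each other. -/
def blobGraph {V : Type*} (G : SimpleGraph V) (𝒞 : Set (Set V)) : SimpleGraph 𝒞 where
  Adj C₁ C₂ := C₁ ≠ C₂ ∧ Touch G (↑C₁) (↑C₂)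
  symm := by
    constructor
    rintro ⟨A, hA⟩ ⟨B, hB⟩ ⟨hne, h⟩
    refine ⟨Ne.symm hne, ?_⟩
    rcases h with h | ⟨a, ha, b, hb, hab⟩
    · exact Or.inl (by rwa [Set.inter_comm])
    · exact Or.inr ⟨b, hb, a, ha, hab.symm⟩
  loopless := by constructor; rintro ⟨A, hA⟩ ⟨hne, -⟩; exact hne rfl

private lemma exists_walk_take {W : Type*} {G : SimpleGraph W} {a b : W} (p : G.Walk a b) :
    ∀ k, k ≤ p.length → ∃ q : G.Walk a (p.getVert k), q.length ≤ k := by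
  intro k
  induction k with
  | zero =>
    intro _
    exact ⟨Walk.nil.copy rfl (p.getVert_zero).symm, by simp⟩
  | succ k ih =>
    intro hk
    obtain ⟨q, hq⟩ := ih (by omega)
    exact ⟨q.concat (p.adj_getVert_succ (by omega)), by rw [Walk.length_concat]; omega⟩

private lemma exists_walk_drop {W : Type*} {G : SimpleGraph W} {a b : W} (p : G.Walk a b)
    (k : ℕ) (hk : k ≤ p.length) :
    ∃ q : G.Walk (p.getVert k) b, q.length ≤ p.length - k := by
  obtain ⟨q, hq⟩ := exists_walk_take p.reverse (p.length - k)
    (by rw [Walk.length_reverse]; omega)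
  have h1 : p.reverse.getVert (p.length - k) = p.getVert k := by
    rw [Walk.getVert_reverse]; congr 1; omega
  exact ⟨(q.copy rfl h1).reverse, by rw [Walk.length_reverse, Walk.length_copy]; omega⟩

theorem blob_graph_of_P5_free_is_P5_free
    {V : Type*} [Fintype V] (G : SimpleGraph V) (hP5 : P5Free G)
    (𝒞 : Set (Set V)) (hconn : ∀ C ∈ 𝒞, (G.induce C).Connected) :
    P5Free (blobGraph G 𝒞) := by
  refine ⟨fun f => ?_⟩
  set C : Fin 5 → Set V := fun i => ((f i : Set V)) with hC
  have hmem : ∀ i, C i ∈ 𝒞 := fun i => (f i).2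
  have hAdjIff : ∀ i j : Fin 5, (blobGraph G 𝒞).Adj (f i) (f j) ↔ (pathGraph 5).Adj i j :=
    fun i j => f.map_adj_iff
  have htouch_of : ∀ i j : Fin 5, (pathGraph 5).Adj i j → Touch G (C i) (C j) :=
    fun i j h => ((hAdjIff i j).mpr h).2
  have hkey : ∀ i j : Fin 5, Touch G (C i) (C j) →
      (i : ℕ) ≤ (j : ℕ) + 1 ∧ (j : ℕ) ≤ (i : ℕ) + 1 := by
    intro i j ht
    by_cases h : i = j
    · subst h; omega
    · have h2 := (hAdjIff i j).mp ⟨fun he => h (f.injective he), ht⟩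
      rw [pathGraph_adj] at h2
      omega
  -- touches along the path
  have t01 : Touch G (C 0) (C 1) := htouch_of 0 1 (by rw [pathGraph_adj]; left; rfl)
  have t12 : Touch G (C 1) (C 2) := htouch_of 1 2 (by rw [pathGraph_adj]; left; rfl)
  have t23 : Touch G (C 2) (C 3) := htouch_of 2 3 (by rw [pathGraph_adj]; left; rfl)
  have t34 : Touch G (C 3) (C 4) := htouch_of 3 4 (by rw [pathGraph_adj]; left; rfl)
  -- elements
  obtain ⟨v0, hv0, e1, he1⟩ : ∃ x, x ∈ C 0 ∧ ∃ y, y ∈ C 1 := by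
    rcases t01 with ⟨x, hx0, hx1⟩ | ⟨a, ha, b, hb, -⟩
    exacts [⟨x, hx0, x, hx1⟩, ⟨a, ha, b, hb⟩]
  obtain ⟨e2, he2⟩ : ∃ y, y ∈ C 2 := by
    rcases t12 with ⟨x, -, hx2⟩ | ⟨a, -, b, hb, -⟩
    exacts [⟨x, hx2⟩, ⟨b, hb⟩]
  obtain ⟨e3, he3, v4, hv4⟩ : ∃ x, x ∈ C 3 ∧ ∃ y, y ∈ C 4 := by
    rcases t34 with ⟨x, hx3, hx4⟩ | ⟨a, ha, b, hb, -⟩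
    exacts [⟨x, hx3, x, hx4⟩, ⟨a, ha, b, hb⟩]
  -- the union and the induced graph on it
  set U : Set V := ⋃ i, C i with hU
  have hsub : ∀ i, C i ⊆ U := fun i => Set.subset_iUnion C i
  set G' : SimpleGraph U := G.induce U with hG'
  have hidx : ∀ x : U, ∃ i : Fin 5, (x : V) ∈ C i := fun x => Set.mem_iUnion.mp x.2
  have hG'G : ∀ x y : U, G'.Adj x y → G.Adj (x : V) (y : V) := fun _ _ h => h
  -- reachability within one blob
  have hreach : ∀ (i : Fin 5) (u w : V) (hu : u ∈ C i) (hw : w ∈ C i),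
      G'.Reachable ⟨u, hsub i hu⟩ ⟨w, hsub i hw⟩ := by
    intro i u w hu hw
    have hc := (hconn (C i) (hmem i)).preconnected ⟨u, hu⟩ ⟨w, hw⟩
    exact hc.map (G.induceHomOfLE (hsub i)).toHom
  -- reachability across a touch
  have hbridge : ∀ (i j : Fin 5), Touch G (C i) (C j) →
      ∀ (u w : V) (hu : u ∈ C i) (hw : w ∈ C j),
      G'.Reachable ⟨u, hsub i hu⟩ ⟨w, hsub j hw⟩ := by
    intro i j ht u w hu hw
    rcases ht with ⟨x, hxi, hxj⟩ | ⟨a, ha, b, hb, hab⟩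
    · exact (hreach i u x hu hxi).trans (hreach j x w hxj hw)
    · have hadj : G'.Adj ⟨a, hsub i ha⟩ ⟨b, hsub j hb⟩ := hab
      exact ((hreach i u a hu ha).trans hadj.reachable).trans (hreach j b w hb hw)
  have R : G'.Reachable ⟨v0, hsub 0 hv0⟩ ⟨v4, hsub 4 hv4⟩ :=
    (((hbridge 0 1 t01 v0 e1 hv0 he1).trans (hbridge 1 2 t12 e1 e2 he1 he2)).trans
      (hbridge 2 3 t23 e2 e3 he2 he3)).trans (hbridge 3 4 t34 e3 v4 he3 hv4)
  obtain ⟨p, hp⟩ := R.exists_walk_length_eq_dist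
  have h0 : ((p.getVert 0 : U) : V) ∈ C 0 := by rw [p.getVert_zero]; exact hv0
  have hLm : ((p.getVert p.length : U) : V) ∈ C 4 := by rw [p.getVert_length]; exact hv4
  have c0 : ((0 : Fin 5) : ℕ) = 0 := rfl
  have c1 : ((1 : Fin 5) : ℕ) = 1 := rfl
  have c2 : ((2 : Fin 5) : ℕ) = 2 := rfl
  have c3 : ((3 : Fin 5) : ℕ) = 3 := rfl
  have c4 : ((4 : Fin 5) : ℕ) = 4 := rfl
  -- the walk has length at least 4
  have hL4 : 4 ≤ p.length := by
    by_contra hlt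
    push_neg at hlt
    have hadjk : ∀ k, k < p.length →
        G.Adj (p.getVert k : V) (p.getVert (k + 1) : V) :=
      fun k hk => hG'G _ _ (p.adj_getVert_succ hk)
    have hcase : p.length = 0 ∨ p.length = 1 ∨ p.length = 2 ∨ p.length = 3 := by omega
    rcases hcase with h | h | h | h
    · have hab : p.getVert 0 = p.getVert p.length := by rw [h]
      have hm : ((p.getVert 0 : U) : V) ∈ C 4 := by rw [hab]; exact hLm
      have := hkey 0 4 (Or.inl ⟨_, h0, hm⟩)
      omega
    · have hadj : G.Adj (p.getVert 0 : V) (p.getVert 1 : V) := hadjk 0 (by omega)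
      have h1m : ((p.getVert 1 : U) : V) ∈ C 4 := by rw [← h]; exact hLm
      have := hkey 0 4 (Or.inr ⟨_, h0, _, h1m, hadj⟩)
      omega
    · obtain ⟨j, hj⟩ := hidx (p.getVert 1)
      have h2m : ((p.getVert 2 : U) : V) ∈ C 4 := by rw [← h]; exact hLm
      have k1 := hkey 0 j (Or.inr ⟨_, h0, _, hj, hadjk 0 (by omega)⟩)
      have k2 := hkey j 4 (Or.inr ⟨_, hj, _, h2m, hadjk 1 (by omega)⟩)
      omega
    · obtain ⟨j1, hj1⟩ := hidx (p.getVert 1)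
      obtain ⟨j2, hj2⟩ := hidx (p.getVert 2)
      have h3m : ((p.getVert 3 : U) : V) ∈ C 4 := by rw [← h]; exact hLm
      have k1 := hkey 0 j1 (Or.inr ⟨_, h0, _, hj1, hadjk 0 (by omega)⟩)
      have k2 := hkey j1 j2 (Or.inr ⟨_, hj1, _, hj2, hadjk 1 (by omega)⟩)
      have k3 := hkey j2 4 (Or.inr ⟨_, hj2, _, h3m, hadjk 2 (by omega)⟩)
      omega
  -- geodesic: shortcuts are impossible
  have hgeo : ∀ (i j c : ℕ), i ≤ j → j ≤ p.length →
      ∀ r : G'.Walk (p.getVert i) (p.getVert j), r.length ≤ c → j ≤ i + c := by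
    intro i j c hij hjL r hrc
    obtain ⟨q1, hq1⟩ := exists_walk_take p i (le_trans hij hjL)
    obtain ⟨q2, hq2⟩ := exists_walk_drop p j hjL
    have hd := SimpleGraph.dist_le ((q1.append r).append q2)
    rw [Walk.length_append, Walk.length_append] at hd
    omega
  have hne : ∀ i j : ℕ, i < j → j ≤ 4 → p.getVert i ≠ p.getVert j := by
    intro i j h1 h2 he
    have := hgeo i j 0 (by omega) (by omega) (Walk.nil.copy rfl he) (by simp)
    omega
  have hnadj : ∀ i j : ℕ, i + 2 ≤ j → j ≤ 4 → ¬ G'.Adj (p.getVert i) (p.getVert j) := by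
    intro i j h1 h2 ha
    have := hgeo i j 1 (by omega) (by omega) ha.toWalk (by simp)
    omega
  have hadjc : ∀ k l : ℕ, k + 1 = l → l ≤ 4 →
      G.Adj (p.getVert k : V) (p.getVert l : V) := by
    intro k l h hl
    subst h
    exact hG'G _ _ (p.adj_getVert_succ (by omega))
  refine hP5.false ⟨⟨fun k => ((p.getVert (k : ℕ) : U) : V), ?_⟩, ?_⟩
  · intro k l h
    rcases Nat.lt_trichotomy (k : ℕ) (l : ℕ) with h1 | h1 | h1
    · exact absurd (Subtype.ext h) (hne k l h1 (by have := l.isLt; omega))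
    · exact Fin.ext h1
    · exact absurd (Subtype.ext h.symm) (hne l k h1 (by have := k.isLt; omega))
  · intro k l
    rw [pathGraph_adj]
    constructor
    · intro h
      rcases Nat.lt_trichotomy (k : ℕ) (l : ℕ) with h1 | h1 | h1
      · rcases eq_or_lt_of_le (Nat.succ_le_of_lt h1) with he | hlt2
        · exact Or.inl he
        · exact absurd h (fun hh =>
            hnadj k l (by omega) (by have := l.isLt; omega) hh)
      · have : k = l := Fin.ext h1
        subst this
        exact (G.irrefl h).elim
      · rcases eq_or_lt_of_le (Nat.succ_le_of_lt h1) with he | hlt2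
        · exact Or.inr he
        · exact absurd h.symm (fun hh =>
            hnadj l k (by omega) (by have := k.isLt; omega) hh)
    · rintro (h | h)
      · exact hadjc k l h (by have := l.isLt; omega)
      · exact (hadjc l k h (by have := k.isLt; omega)).symm
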